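/- Let f(x) and g(y) be nonconstant polynomials over the algebraic closure of F_q such that the two-variable polynomial F(x,y) = f(x) - g(y) is not a polynomial in x^p and y^p (where p is the characteristic). Then in the factorization of F into irreducible factors, the irreducible factors are pairwise coprime (F is squarefree up to units). -/

import Mathlib

open Polynomial MvPolynomial

private lemma sq_of_equiv {A B : Type*} [CommMonoid A] [CommMonoid B]
    (e : A ≃* B) {a : A} (h : Squarefree (e a)) : Squarefree a := by
  intro q hq
  have h2 : e q * e q ∣ e a := by
    rw [← map_mul]; exact map_dvd e.toMonoidHom hq
  have := (h (e q) h2).map e.symm.toMonoidHom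
  simpa using this

private lemma key {K : Type*} [Field K] [IsAlgClosed K]
    (f g : Polynomial K) (hg : 0 < g.natDegree) (hf' : f.derivative ≠ 0) :
    Squarefree (Polynomial.aeval (MvPolynomial.X 0) f - Polynomial.aeval (MvPolynomial.X 1) g
      : MvPolynomial (Fin 2) K) := by
  have hf : 0 < f.natDegree := by
    by_contra h
    push_neg at h
    obtain ⟨a, rfl⟩ := Polynomial.natDegree_eq_zero.mp (Nat.le_zero.mp h)
    exact hf' (Polynomial.derivative_C)
  set R := MvPolynomial (Fin 1) K
  set L := FractionRing R
  set ρ : K →+* R := algebraMap K R with hρ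
  set ψ : R →+* L := algebraMap R L with hψ
  have hψinj : Function.Injective ψ := IsFractionRing.injective R L
  set r : R := Polynomial.aeval (MvPolynomial.X 0) g with hr
  set P : Polynomial R := f.map ρ - Polynomial.C r with hP
  -- Squarefree of Q := P.map ψ over the field L
  set Q : Polynomial L := P.map ψ with hQ
  have hQeq : Q = f.map (ψ.comp ρ) - Polynomial.C (ψ r) := by
    rw [hQ, hP, Polynomial.map_sub, Polynomial.map_map, Polynomial.map_C]
  have hQsep : Q.Separable := by
    have hQder : Q.derivative = f.derivative.map (ψ.comp ρ) := by
      rw [hQeq, derivative_sub, derivative_C, sub_zero, Polynomial.derivative_map]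
    rw [Polynomial.separable_def, hQder]
    refine (Polynomial.isCoprime_iff_aeval_ne_zero_of_isAlgClosed (k := L) (AlgebraicClosure L) _ _).mpr ?_
    set M := AlgebraicClosure L with hM
    set θ : L →+* M := algebraMap L M with hθ
    set τ : K →+* M := θ.comp (ψ.comp ρ) with hτ
    by_contra hcon
    push_neg at hcon
    obtain ⟨a, ha1, ha2⟩ := hcon
    have hτinj : Function.Injective τ := τ.injective
    -- a is a root of f.derivative.map τ
    have ha2' : Polynomial.eval₂ τ a f.derivative = 0 := by
      rw [Polynomial.aeval_def, Polynomial.eval₂_map] at ha2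
      exact ha2
    have hmapne : f.derivative.map τ ≠ 0 := (Polynomial.map_ne_zero_iff hτinj).mpr hf'
    have hmem : a ∈ (f.derivative.map τ).roots := by
      rw [Polynomial.mem_roots hmapne, Polynomial.IsRoot, Polynomial.eval_map]
      exact ha2'
    rw [(IsAlgClosed.splits f.derivative).roots_map τ] at hmem
    obtain ⟨β, hβ, rfl⟩ := Multiset.mem_map.mp hmem
    -- From aeval (τ β) Q = 0, get r = ρ (f.eval β)
    have ha1' : Polynomial.eval₂ τ (τ β) f - θ (ψ r) = 0 := by
      rw [hQeq, map_sub, Polynomial.aeval_C, Polynomial.aeval_def, Polynomial.eval₂_map] at ha1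
      exact ha1
    rw [Polynomial.eval₂_hom] at ha1'
    have heq2 : θ (ψ (ρ (f.eval β))) = θ (ψ r) := sub_eq_zero.mp ha1'
    have hreq : r = ρ (f.eval β) := (hψinj (θ.injective heq2)).symm
    -- contradiction: g would be constant
    have h1 : MvPolynomial.aeval (fun _ : Fin 1 => (Polynomial.X : Polynomial K)) r = g := by
      rw [hr, ← Polynomial.aeval_algHom_apply]
      simp
    have h2 : MvPolynomial.aeval (fun _ : Fin 1 => (Polynomial.X : Polynomial K)) (ρ (f.eval β))
        = Polynomial.C (f.eval β) := by
      rw [hρ]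
      rw [AlgHom.commutes]
      rw [Polynomial.algebraMap_eq]
    rw [hreq, h2] at h1
    have : g.natDegree = 0 := by rw [← h1]; simp
    omega
  have hQsq : Squarefree Q := hQsep.squarefree
  -- lift squarefreeness to P
  have hPsq : Squarefree P := by
    intro q hq
    rcases Nat.eq_zero_or_pos q.natDegree with h0 | hpos
    · obtain ⟨a, rfl⟩ := Polynomial.natDegree_eq_zero.mp h0
      have hdvd : Polynomial.C a ∣ P := dvd_trans (dvd_mul_right _ _) hq
      have hcoeff : a ∣ P.coeff f.natDegree :=
        (Polynomial.C_dvd_iff_dvd_coeff a P).mp hdvd f.natDegree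
      have hPcoeff : P.coeff f.natDegree = ρ f.leadingCoeff := by
        rw [hP, Polynomial.coeff_sub, Polynomial.coeff_map, Polynomial.coeff_C,
          if_neg (by omega), sub_zero, Polynomial.leadingCoeff]
      have hunit : IsUnit (ρ f.leadingCoeff) := by
        apply IsUnit.map
        exact (Polynomial.leadingCoeff_ne_zero.mpr (fun h => by simp [h] at hf)).isUnit
      rw [hPcoeff] at hcoeff
      exact Polynomial.isUnit_C.mpr (isUnit_of_dvd_unit hcoeff hunit)
    · exfalso
      have hm : q.map ψ * q.map ψ ∣ Q := by
        rw [← Polynomial.map_mul]; exact Polynomial.map_dvd ψ hq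
      have := hQsq _ hm
      exact Polynomial.not_isUnit_of_natDegree_pos _
        (by rwa [Polynomial.natDegree_map_eq_of_injective hψinj]) this
  -- transfer along finSuccEquiv
  set e := MvPolynomial.finSuccEquiv K 1 with he
  apply sq_of_equiv e.toRingEquiv.toMulEquiv
  have heF : e (Polynomial.aeval (MvPolynomial.X 0) f - Polynomial.aeval (MvPolynomial.X 1) g) = P := by
    rw [map_sub, hP]
    congr 1
    · rw [← Polynomial.aeval_algHom_apply, MvPolynomial.finSuccEquiv_X_zero]
      have hext : (Polynomial.aeval (Polynomial.X : Polynomial R) : Polynomial K →ₐ[K] Polynomial R)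
          = Polynomial.mapAlgHom (Algebra.ofId K R) := Polynomial.algHom_ext (by simp)
      calc Polynomial.aeval (Polynomial.X : Polynomial R) f
          = Polynomial.mapAlgHom (Algebra.ofId K R) f := by rw [hext]
        _ = f.map ρ := by rw [Polynomial.coe_mapAlgHom]; rfl
    · have hX1 : (MvPolynomial.X 1 : MvPolynomial (Fin 2) K) = MvPolynomial.X (Fin.succ 0) := rfl
      rw [hX1, ← Polynomial.aeval_algHom_apply, MvPolynomial.finSuccEquiv_X_succ]
      set φ : R →ₐ[K] Polynomial R := (Polynomial.CAlgHom : R →ₐ[R] Polynomial R).restrictScalars K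
      have hφ : (Polynomial.C (MvPolynomial.X 0 : R) : Polynomial R) = φ (MvPolynomial.X 0) := rfl
      rw [hφ, Polynomial.aeval_algHom_apply]
      rfl
  show Squarefree (e _)
  rw [heF]
  exact hPsq

theorem stmt_6 {Fq : Type*} [Field Fq] [Fintype Fq]
    (p : ℕ) [Fact p.Prime] [CharP Fq p]
    (f g : Polynomial (AlgebraicClosure Fq))
    (hf : 0 < f.natDegree) (hg : 0 < g.natDegree)
    (F : MvPolynomial (Fin 2) (AlgebraicClosure Fq))
    (hF : F = Polynomial.aeval (MvPolynomial.X 0) f - Polynomial.aeval (MvPolynomial.X 1) g)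
    (hnp : ¬ ∃ G : MvPolynomial (Fin 2) (AlgebraicClosure Fq),
      F = MvPolynomial.aeval (fun i => MvPolynomial.X i ^ p) G) :
    Squarefree F := by
  set K := AlgebraicClosure Fq
  by_cases hfd : f.derivative = 0
  · by_cases hgd : g.derivative = 0
    · -- contradiction with hnp
      exfalso
      apply hnp
      refine ⟨Polynomial.aeval (MvPolynomial.X 0) (Polynomial.contract p f)
        - Polynomial.aeval (MvPolynomial.X 1) (Polynomial.contract p g), ?_⟩
      have hpne : p ≠ 0 := (Fact.out : p.Prime).ne_zero
      rw [map_sub]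
      have key1 : ∀ (h : Polynomial K) (i : Fin 2), h.derivative = 0 →
          (MvPolynomial.aeval (fun i => (MvPolynomial.X i ^ p : MvPolynomial (Fin 2) K)))
            (Polynomial.aeval (MvPolynomial.X i : MvPolynomial (Fin 2) K) (Polynomial.contract p h))
          = Polynomial.aeval (MvPolynomial.X i) h := by
        intro h i hd
        rw [← Polynomial.aeval_algHom_apply, MvPolynomial.aeval_X,
          ← Polynomial.expand_aeval p (Polynomial.contract p h),
          Polynomial.expand_contract p hd hpne]
      rw [key1 f 0 hfd, key1 g 1 hgd, hF]
    · -- swap variables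
      have hsq : Squarefree (Polynomial.aeval (MvPolynomial.X 0) g
          - Polynomial.aeval (MvPolynomial.X 1) f : MvPolynomial (Fin 2) K) :=
        key g f hf hgd
      set e := MvPolynomial.renameEquiv K (Equiv.swap (0 : Fin 2) 1) with he
      have heq : e (Polynomial.aeval (MvPolynomial.X 0) g - Polynomial.aeval (MvPolynomial.X 1) f)
          = -F := by
        rw [map_sub, ← Polynomial.aeval_algHom_apply, ← Polynomial.aeval_algHom_apply, hF]
        simp [he, Equiv.swap_apply_left, Equiv.swap_apply_right]
      have hsq2 : Squarefree (-F) := by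
        rw [← heq]
        apply sq_of_equiv e.symm.toRingEquiv.toMulEquiv
        show Squarefree (e.symm (e _))
        simpa using hsq
      exact hsq2.squarefree_of_dvd (dvd_neg.mpr dvd_rfl)
  · rw [hF]
    exact key f g hg hfd
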